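/- For n odd, n ≥ 3, the maximum over all proper 3-colorings c of C_n of the maximum size of a critical set for c equals n - 1. That is, LCS_max(C_n) = n - 1. -/

import Mathlib

open SimpleGraph Finset

/-- A proper `k`-coloring of a simple graph: adjacent vertices get distinct colors. -/
def properColoring {V : Type*} (G : SimpleGraph V) (k : ℕ) (c : V → Fin k) : Prop :=
  ∀ ⦃v w : V⦄, G.Adj v w → c v ≠ c w

/-- `S` is a determining set for `(G, c)`: `c` is the unique proper `k`-coloring
agreeing with `c` on `S`. -/
def Determining {V : Type*} (G : SimpleGraph V) {k : ℕ} (c : V → Fin k) (S : Finset V) : Prop :=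
  ∀ c' : V → Fin k, properColoring G k c' → (∀ v ∈ S, c' v = c v) → c' = c

/-- A critical set: an inclusion-minimal determining set. -/
def CriticalSet {V : Type*} (G : SimpleGraph V) {k : ℕ} (c : V → Fin k) (S : Finset V) : Prop :=
  Determining G c S ∧ ∀ T : Finset V, T ⊂ S → ¬ Determining G c T

/-- The cycle graph on `Fin n`, with `i` adjacent to `i ± 1` (mod `n`). -/
def cycGraph (n : ℕ) [NeZero n] : SimpleGraph (Fin n) :=
  SimpleGraph.fromRel (fun i j => i + 1 = j)

/-- A vertex is colorful if every color appears on its closed neighborhood. -/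
def Colorful {V : Type*} (G : SimpleGraph V) {k : ℕ} (c : V → Fin k) (v : V) : Prop :=
  ∀ a : Fin k, ∃ w : V, (w = v ∨ G.Adj v w) ∧ c w = a

/-- `G` is uniquely `k`-colorable: any two proper `k`-colorings differ by a permutation
of the colors. -/
def UniquelyColorable {V : Type*} (G : SimpleGraph V) (k : ℕ) : Prop :=
  ∀ c c' : V → Fin k, properColoring G k c → properColoring G k c' →
    ∃ π : Equiv.Perm (Fin k), c' = π ∘ c


section
variable {n : ℕ} [NeZero n]

lemma adj_iff (v w : Fin n) : (cycGraph n).Adj v w ↔ v ≠ w ∧ (v + 1 = w ∨ w + 1 = v) := by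
  simp [cycGraph, SimpleGraph.fromRel_adj]

lemma proper_of_step (c : Fin n → Fin 3) (h : ∀ i : Fin n, c i ≠ c (i+1)) :
    properColoring (cycGraph n) 3 c := by
  intro v w hvw
  rw [adj_iff] at hvw
  rcases hvw.2 with h1 | h1
  · rw [← h1]; exact h v
  · rw [← h1]; exact (h w).symm

lemma succ_val (i : Fin n) : ((i+1 : Fin n) : ℕ) = if (i:ℕ) = n - 1 then 0 else (i:ℕ)+1 := by
  have hn : 0 < n := Nat.pos_of_ne_zero (NeZero.ne n)
  have h : ((i+1 : Fin n) : ℕ) = ((i:ℕ)+1) % n := by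
    rw [Fin.add_def]; simp [Fin.val_one', Nat.add_mod]
  have hi := i.isLt
  split <;> rename_i hc
  · rw [h, hc]
    have : n - 1 + 1 = n := by omega
    rw [this, Nat.mod_self]
  · rw [h, Nat.mod_eq_of_lt (by omega)]

lemma adj_succ (h2 : 2 ≤ n) (i : Fin n) : (cycGraph n).Adj i (i+1) := by
  rw [adj_iff]
  refine ⟨fun he => ?_, Or.inl rfl⟩
  have := succ_val i
  rw [← he] at this
  have hi := i.isLt
  split at this <;> omega

end

/-- the canonical coloring 0,1,0,1,...,0,1,2 -/
def c0 (n : ℕ) : Fin n → Fin 3 := fun i =>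
  if (i:ℕ) = n-1 then 2 else if (i:ℕ) % 2 = 0 then 0 else 1

section
variable {n : ℕ} [NeZero n]

lemma c0_proper (hodd : n % 2 = 1) (h3 : 3 ≤ n) : properColoring (cycGraph n) 3 (c0 n) := by
  apply proper_of_step
  intro i
  have hi := i.isLt
  have hs := succ_val i
  simp only [c0]
  split at hs <;> split_ifs <;> first | decide | (exfalso; omega)

lemma witness (hodd : n % 2 = 1) (h3 : 3 ≤ n) (v : Fin n) (hv : (v:ℕ) ≠ n-1) :
    ∃ c'' : Fin n → Fin 3, properColoring (cycGraph n) 3 c'' ∧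
      (∀ w : Fin n, (w:ℕ) ≠ n-1 → w ≠ v → c'' w = c0 n w) ∧ c'' ≠ c0 n := by
  have hvlt := v.isLt
  rcases eq_or_ne (v:ℕ) 0 with hv0 | hv0
  · -- v = 0 : recolor 0 ↦ 2, n-1 ↦ 0
    refine ⟨fun w => if (w:ℕ) = 0 then 2 else if (w:ℕ) = n-1 then 0
        else if (w:ℕ) % 2 = 0 then 0 else 1, ?_, ?_, ?_⟩
    · apply proper_of_step
      intro i
      have hi := i.isLt
      have hs := succ_val i
      beta_reduce
      split at hs <;> split_ifs <;> first | decide | (exfalso; omega)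
    · intro w hw1 hw2
      have hw0 : (w:ℕ) ≠ 0 := fun h => hw2 (Fin.ext (h.trans hv0.symm))
      simp only [c0]
      split_ifs <;> first | rfl | (exfalso; omega)
    · intro h
      have h2 := congrFun h ⟨n-1, by omega⟩
      simp only [c0] at h2
      split_ifs at h2 <;> first | (exact absurd h2 (by decide)) | (exfalso; omega)
  · rcases eq_or_ne (v:ℕ) (n-2) with hv2 | hv2
    · -- v = n-2 : recolor n-2 ↦ 2, n-1 ↦ 1
      refine ⟨fun w => if (w:ℕ) = n-2 then 2 else if (w:ℕ) = n-1 then 1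
          else if (w:ℕ) % 2 = 0 then 0 else 1, ?_, ?_, ?_⟩
      · apply proper_of_step
        intro i
        have hi := i.isLt
        have hs := succ_val i
        beta_reduce
        split at hs <;> split_ifs <;> first | decide | (exfalso; omega)
      · intro w hw1 hw2
        have hw0 : (w:ℕ) ≠ n-2 := fun h => hw2 (Fin.ext (h.trans hv2.symm))
        simp only [c0]
        split_ifs <;> first | rfl | (exfalso; omega)
      · intro h
        have h2 := congrFun h v
        simp only [c0] at h2
        split_ifs at h2 <;> first | (exact absurd h2 (by decide)) | (exfalso; omega)
    · -- 1 ≤ v ≤ n-3 : recolor v ↦ 2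
      refine ⟨fun w => if (w:ℕ) = (v:ℕ) then 2 else if (w:ℕ) = n-1 then 2
          else if (w:ℕ) % 2 = 0 then 0 else 1, ?_, ?_, ?_⟩
      · apply proper_of_step
        intro i
        have hi := i.isLt
        have hs := succ_val i
        beta_reduce
        split at hs <;> split_ifs <;> first | decide | (exfalso; omega)
      · intro w hw1 hw2
        have hw0 : (w:ℕ) ≠ (v:ℕ) := fun h => hw2 (Fin.ext h)
        simp only [c0]
        split_ifs <;> first | rfl | (exfalso; omega)
      · intro h
        have h2 := congrFun h v
        simp only [c0] at h2
        split_ifs at h2 <;> first | (exact absurd h2 (by decide)) | (exfalso; omega)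

end

section
variable {n : ℕ} [NeZero n]

lemma third : ∀ x y a b : Fin 3, a ≠ b → x ≠ a → x ≠ b → y ≠ a → y ≠ b → x = y := by decide

lemma mem_part (hodd : n % 2 = 1) (h3 : 3 ≤ n) :
    ∃ (c : Fin n → Fin 3) (S : Finset (Fin n)),
      properColoring (cycGraph n) 3 c ∧ CriticalSet (cycGraph n) c S ∧ S.card = n - 1 := by
  have h2 : 2 ≤ n := by omega
  set u : Fin n := ⟨n-1, by omega⟩ with hu
  set p : Fin n := ⟨n-2, by omega⟩ with hp
  have hpu : p + 1 = u := by
    have hs := succ_val p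
    apply Fin.ext
    rw [hs]
    show (if (n-2 : ℕ) = n - 1 then 0 else (n-2)+1) = n - 1
    rw [if_neg (by omega)]
    omega
  have hu0 : u + 1 = (0 : Fin n) := by
    have hs := succ_val u
    apply Fin.ext
    rw [hs]
    show (if (n-1 : ℕ) = n - 1 then 0 else (n-1)+1) = 0
    rw [if_pos rfl]
  have hApu : (cycGraph n).Adj p u := by rw [← hpu]; exact adj_succ h2 p
  have hAu0 : (cycGraph n).Adj u 0 := by rw [← hu0]; exact adj_succ h2 u
  have hcp : c0 n p = 1 := by
    simp only [c0, hp]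
    split_ifs <;> first | rfl | (exfalso; omega)
  have hc0z : c0 n (0 : Fin n) = 0 := by
    simp only [c0, Fin.val_zero]
    split_ifs <;> first | rfl | (exfalso; omega)
  have hcu : c0 n u = 2 := by
    simp only [c0, hu]
    split_ifs <;> first | rfl | (exfalso; omega)
  refine ⟨c0 n, univ.erase u, c0_proper hodd h3, ⟨?_, ?_⟩, ?_⟩
  · -- determining
    intro c' hc' hagr
    funext x
    by_cases hx : x = u
    · subst hx
      have e1 : c' p = 1 := by
        rw [hagr p (mem_erase.2 ⟨by simp [hp, hu, Fin.ext_iff]; omega, mem_univ _⟩), hcp]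
      have e2 : c' (0 : Fin n) = 0 := by
        rw [hagr 0 (mem_erase.2 ⟨by simp [hu, Fin.ext_iff]; omega, mem_univ _⟩), hc0z]
      have d1 : c' u ≠ 1 := by rw [← e1]; exact (hc' hApu).symm
      have d2 : c' u ≠ 0 := by rw [← e2]; exact hc' hAu0
      rw [hcu]
      have key : ∀ x : Fin 3, x ≠ 1 → x ≠ 0 → x = 2 := by decide
      exact key _ d1 d2
    · exact hagr x (mem_erase.2 ⟨hx, mem_univ _⟩)
  · -- minimality
    intro T hT hTdet
    obtain ⟨v, hvS, hvT⟩ := exists_of_ssubset hT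
    have hvu : (v:ℕ) ≠ n - 1 := by
      have := (mem_erase.1 hvS).1
      simpa [hu, Fin.ext_iff] using this
    obtain ⟨c'', hc''p, hc''agr, hc''ne⟩ := witness hodd h3 v hvu
    apply hc''ne
    apply hTdet c'' hc''p
    intro w hwT
    have hwS := hT.1 hwT
    have hwu : (w:ℕ) ≠ n - 1 := by
      have := (mem_erase.1 hwS).1
      simpa [hu, Fin.ext_iff] using this
    exact hc''agr w hwu (fun h => hvT (h ▸ hwT))
  · rw [card_erase_of_mem (mem_univ _), card_univ, Fintype.card_fin]

open Fin.NatCast Fin.CommRing in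
lemma upper_part (hodd : n % 2 = 1) (h3 : 3 ≤ n) (c : Fin n → Fin 3) (S : Finset (Fin n))
    (hc : properColoring (cycGraph n) 3 c) (hcrit : CriticalSet (cycGraph n) c S) :
    S.card ≤ n - 1 := by
  have h2 : 2 ≤ n := by omega
  by_contra hbig
  push_neg at hbig
  have hle : S.card ≤ n := by
    simpa using card_le_card (subset_univ S)
  have hSn : S.card = n := by omega
  have hSuniv : S = univ := by
    apply eq_univ_of_card
    rw [hSn, Fintype.card_fin]
  -- find w with c w ≠ c (w + 2)
  have hne : ∃ w : Fin n, c w ≠ c (w + 2) := by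
    by_contra hall
    push_neg at hall
    have key : ∀ (k : ℕ) (j : Fin n), c (j + (2 * k : ℕ)) = c j := by
      intro k
      induction k with
      | zero => intro j; simp
      | succ k ih =>
        intro j
        have : ((2 * (k+1) : ℕ) : Fin n) = ((2 * k : ℕ) : Fin n) + 2 := by push_cast; ring
        rw [this, ← add_assoc, ← hall (j + ((2 * k : ℕ) : Fin n)), ih]
    have hconst : ∀ i : Fin n, c i = c 0 := by
      intro i
      have h2n : 2 * ((n+1)/2) = n + 1 := by omega
      have : ((0 : Fin n) + ((2 * (((n+1)/2) * (i:ℕ)) : ℕ) : Fin n)) = i := by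
        apply Fin.ext
        simp only [Fin.val_zero, zero_add]
        rw [Fin.val_natCast]
        rw [← mul_assoc, h2n]
        have : (n+1) * (i:ℕ) = (i:ℕ) + (i:ℕ) * n := by ring
        rw [this, Nat.add_mul_mod_self_right, Nat.mod_eq_of_lt i.isLt]
      rw [← this, key]
    have hadj : (cycGraph n).Adj 0 1 := by
      have := adj_succ h2 (0 : Fin n)
      simpa using this
    exact hc hadj ((hconst 0).symm ▸ (hconst 1) ▸ rfl)
  obtain ⟨w, hw⟩ := hne
  -- univ.erase (w+1) is determining, contradicting minimality
  have hw2 : w + 1 + 1 = w + 2 := by ring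
  have hA1 : (cycGraph n).Adj w (w+1) := adj_succ h2 w
  have hA2 : (cycGraph n).Adj (w+1) (w+2) := by rw [← hw2]; exact adj_succ h2 (w+1)
  apply hcrit.2 (univ.erase (w+1))
  · rw [hSuniv]; exact erase_ssubset (mem_univ _)
  · intro c' hc' hagr
    funext x
    by_cases hx : x = w + 1
    · subst hx
      have e1 : c' w = c w := hagr w (mem_erase.2 ⟨(adj_iff w (w+1)).1 hA1 |>.1, mem_univ _⟩)
      have e2 : c' (w+2) = c (w+2) := by
        refine hagr _ (mem_erase.2 ⟨?_, mem_univ _⟩)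
        intro h
        exact ((adj_iff (w+1) (w+2)).1 hA2).1 (h ▸ rfl) |>.elim
      exact third _ _ _ _ hw (by rw [← e1]; exact (hc' hA1).symm)
        (by rw [← e2]; exact hc' hA2) (hc hA1).symm (hc hA2)
    · exact hagr x (mem_erase.2 ⟨hx, mem_univ _⟩)

end

theorem stmt7 (n : ℕ) [NeZero n] (hn : Odd n) (h3 : 3 ≤ n) :
    IsGreatest {m : ℕ | ∃ (c : Fin n → Fin 3) (S : Finset (Fin n)),
      properColoring (cycGraph n) 3 c ∧ CriticalSet (cycGraph n) c S ∧ S.card = m}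
      (n - 1) := by
  have hodd : n % 2 = 1 := Nat.odd_iff.1 hn
  constructor
  · exact mem_part hodd h3
  · rintro m ⟨c, S, hc, hcrit, rfl⟩
    exact upper_part hodd h3 c S hc hcrit
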